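/- Let 1/3 < K < 1, μ = (3K−1)/(1−K), u₀ ∈ ℝ, and let u : (0,1] → ℝ be differentiable, satisfy the background ODE u'(t) = K μ t^{2μ−1} / (t^{2μ} + (1−K) e^{2u(t)}) on (0,1], and u(1) = u₀. Then there is a constant C > 0 (depending only on K and u₀) such that |u'(t)| ≤ C t^{2μ−1} for all t ∈ (0,1]. -/

import Mathlib

open Set Real

/-- Helper: if `g` has nonpositive derivative on `Ioc 0 1`, then `g 1 ≤ g t` there. -/
lemma aux_anti {g g' : ℝ → ℝ}
    (hg : ∀ x ∈ Set.Ioc (0:ℝ) 1, HasDerivAt g (g' x) x)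
    (hg' : ∀ x ∈ Set.Ioc (0:ℝ) 1, g' x ≤ 0) :
    ∀ t ∈ Set.Ioc (0:ℝ) 1, g 1 ≤ g t := by
  have hanti : AntitoneOn g (Set.Ioc (0:ℝ) 1) := by
    apply antitoneOn_of_deriv_nonpos (convex_Ioc 0 1)
    · exact fun x hx => (hg x hx).continuousAt.continuousWithinAt
    · intro x hx
      rw [interior_Ioc] at hx
      exact ((hg x (Ioo_subset_Ioc_self hx)).differentiableAt).differentiableWithinAt
    · intro x hx
      rw [interior_Ioc] at hx
      rw [(hg x (Ioo_subset_Ioc_self hx)).deriv]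
      exact hg' x (Ioo_subset_Ioc_self hx)
  intro t ht
  exact hanti ht ⟨one_pos, le_refl 1⟩ ht.2

/-- The derivative bound `|u'(t)| ≤ C t^{2μ−1}` for solutions of the background ODE. -/
theorem stmt3 (K μ u₀ : ℝ) (hK : 1/3 < K) (hK' : K < 1)
    (hμ : μ = (3*K - 1)/(1 - K))
    (u : ℝ → ℝ)
    (hode : ∀ t ∈ Set.Ioc (0:ℝ) 1,
      HasDerivAt u
        (K * μ * t ^ (2*μ - 1) / (t ^ (2*μ) + (1 - K) * Real.exp (2 * u t))) t)
    (hinit : u 1 = u₀) :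
    ∃ C : ℝ, 0 < C ∧ ∀ t ∈ Set.Ioc (0:ℝ) 1, |deriv u t| ≤ C * t ^ (2*μ - 1) := by
  have h1K : (0:ℝ) < 1 - K := by linarith
  have h3K : (0:ℝ) < 3*K - 1 := by linarith
  have hμpos : 0 < μ := hμ ▸ div_pos h3K h1K
  have hμK : μ * (1 - K) = 3*K - 1 := by
    rw [hμ]; field_simp
  have hKpos : (0:ℝ) < K := by linarith
  have hKμ : 0 < K * μ := mul_pos hKpos hμpos
  -- denominator positivity
  have hD : ∀ t ∈ Set.Ioc (0:ℝ) 1,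
      0 < t ^ (2*μ) + (1 - K) * Real.exp (2 * u t) := by
    intro t ht
    have := Real.rpow_pos_of_pos ht.1 (2*μ)
    positivity
  -- numerator nonneg / positive
  have hnum : ∀ t ∈ Set.Ioc (0:ℝ) 1, 0 ≤ K * μ * t ^ (2*μ - 1) := by
    intro t ht
    have := Real.rpow_pos_of_pos ht.1 (2*μ - 1)
    positivity
  -- Step 1: u t ≥ u₀ + Kμ log t
  have step1 : ∀ t ∈ Set.Ioc (0:ℝ) 1, u₀ + K*μ*Real.log t ≤ u t := by
    have hg : ∀ x ∈ Set.Ioc (0:ℝ) 1,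
        HasDerivAt (fun t => u t - K*μ*Real.log t)
          (K * μ * x ^ (2*μ - 1) / (x ^ (2*μ) + (1 - K) * Real.exp (2 * u x)) - K*μ*x⁻¹) x := by
      intro x hx
      exact (hode x hx).sub ((Real.hasDerivAt_log hx.1.ne').const_mul (K*μ))
    have hle := aux_anti hg (by
      intro x hx
      have hx0 := hx.1
      have hDx := hD x hx
      have hsplit : x ^ (2*μ - 1) = x ^ (2*μ) * x⁻¹ := by
        rw [show 2*μ - 1 = 2*μ + (-1) by ring, Real.rpow_add hx0, Real.rpow_neg_one]
      have hexp : 0 < (1 - K) * Real.exp (2 * u x) := by positivity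
      have hxp : 0 < x ^ (2*μ) := Real.rpow_pos_of_pos hx0 (2*μ)
      have hxinv : 0 < x⁻¹ := inv_pos.mpr hx0
      rw [sub_nonpos, hsplit, div_le_iff₀ hDx]
      nlinarith [mul_pos hKμ hxinv, mul_pos (mul_pos hKμ hxinv) hexp])
    intro t ht
    have := hle t ht
    simp only [hinit, Real.log_one, mul_zero, sub_zero] at this
    linarith
  -- Step 2: u is bounded below
  set β : ℝ := 2*μ - 1 - 2*(K*μ) with hβ
  have hβ1 : β + 1 = 2*(3*K - 1) := by
    rw [hβ]; nlinarith [hμK]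
  have hβ1pos : 0 < β + 1 := by rw [hβ1]; linarith
  set A : ℝ := K*μ/((1-K)*Real.exp (2*u₀)) with hA
  have hApos : 0 < A := by
    apply div_pos hKμ; positivity
  -- derivative bound u' ≤ A t^β on Ioc
  have hub : ∀ t ∈ Set.Ioc (0:ℝ) 1,
      K * μ * t ^ (2*μ - 1) / (t ^ (2*μ) + (1 - K) * Real.exp (2 * u t)) ≤ A * t ^ β := by
    intro t ht
    have ht0 := ht.1
    have hDt := hD t ht
    have hw : (1-K)*Real.exp (2*u₀) * t ^ (2*(K*μ)) ≤ (1 - K) * Real.exp (2 * u t) := by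
      have h1 := step1 t ht
      have : Real.exp (2*u₀) * t ^ (2*(K*μ)) ≤ Real.exp (2 * u t) := by
        rw [Real.rpow_def_of_pos ht0, ← Real.exp_add]
        apply Real.exp_le_exp.mpr
        nlinarith [Real.log_nonpos (le_of_lt ht0) ht.2, h1]
      nlinarith [Real.exp_pos (2*u₀), Real.rpow_pos_of_pos ht0 (2*(K*μ))]
    have hwpos : 0 < (1-K)*Real.exp (2*u₀) * t ^ (2*(K*μ)) := by
      have := Real.rpow_pos_of_pos ht0 (2*(K*μ)); positivity
    have hle1 : K * μ * t ^ (2*μ - 1) / (t ^ (2*μ) + (1 - K) * Real.exp (2 * u t))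
        ≤ K * μ * t ^ (2*μ - 1) / ((1-K)*Real.exp (2*u₀) * t ^ (2*(K*μ))) := by
      apply div_le_div_of_nonneg_left (hnum t ht) hwpos
      have hxp : 0 < t ^ (2*μ) := Real.rpow_pos_of_pos ht0 (2*μ)
      linarith
    refine hle1.trans (le_of_eq ?_)
    rw [hA]
    have hsplit : t ^ (2*μ - 1) = t ^ β * t ^ (2*(K*μ)) := by
      rw [← Real.rpow_add ht0]; congr 1; rw [hβ]; ring
    rw [hsplit]
    have h1 : ((1:ℝ)-K)*Real.exp (2*u₀) ≠ 0 := by positivity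
    have h2 : t ^ (2*(K*μ)) ≠ 0 := (Real.rpow_pos_of_pos ht0 _).ne'
    field_simp
  -- lower bound on u via second comparison
  have step2 : ∀ t ∈ Set.Ioc (0:ℝ) 1, u₀ - A/(β+1) ≤ u t := by
    have hg : ∀ x ∈ Set.Ioc (0:ℝ) 1,
        HasDerivAt (fun t => u t - A/(β+1) * t ^ (β+1))
          (K * μ * x ^ (2*μ - 1) / (x ^ (2*μ) + (1 - K) * Real.exp (2 * u x))
            - A * x ^ β) x := by
      intro x hx
      have hp : HasDerivAt (fun t : ℝ => t ^ (β+1)) ((β+1) * x ^ (β+1-1)) x :=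
        Real.hasDerivAt_rpow_const (Or.inl hx.1.ne')
      have hp' : HasDerivAt (fun t : ℝ => A/(β+1) * t ^ (β+1)) (A * x ^ β) x := by
        have := hp.const_mul (A/(β+1))
        refine this.congr_deriv ?_
        rw [show β + 1 - 1 = β by ring]
        field_simp
      exact (hode x hx).sub hp'
    have hle := aux_anti hg (by
      intro x hx
      have := hub x hx
      linarith)
    intro t ht
    have h := hle t ht
    simp only [hinit, Real.one_rpow] at h
    have htp : 0 ≤ t ^ (β+1) := (Real.rpow_pos_of_pos ht.1 _).le
    have hA1 : 0 ≤ A/(β+1) := le_of_lt (div_pos hApos hβ1pos)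
    nlinarith [mul_nonneg hA1 htp]
  -- conclusion
  set m : ℝ := u₀ - A/(β+1) with hm
  refine ⟨K*μ/((1-K)*Real.exp (2*m)), div_pos hKμ (by positivity), ?_⟩
  intro t ht
  have hdt := (hode t ht).deriv
  rw [hdt]
  have hDt := hD t ht
  have hnt := hnum t ht
  have hwpos : 0 < (1-K)*Real.exp (2*m) := by positivity
  have hw : (1-K)*Real.exp (2*m) ≤ t ^ (2*μ) + (1 - K) * Real.exp (2 * u t) := by
    have h2 := step2 t ht
    have hxp : 0 < t ^ (2*μ) := Real.rpow_pos_of_pos ht.1 (2*μ)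
    have : Real.exp (2*m) ≤ Real.exp (2 * u t) := Real.exp_le_exp.mpr (by linarith)
    nlinarith
  rw [abs_of_nonneg (div_nonneg hnt hDt.le)]
  calc K * μ * t ^ (2*μ - 1) / (t ^ (2*μ) + (1 - K) * Real.exp (2 * u t))
      ≤ K * μ * t ^ (2*μ - 1) / ((1-K)*Real.exp (2*m)) :=
        div_le_div_of_nonneg_left hnt hwpos hw
    _ = K*μ/((1-K)*Real.exp (2*m)) * t ^ (2*μ - 1) := by ring
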